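/- Let X be a semi-inner product C*-module over a C*-algebra A, x₀, y₀ ∈ X, (α₁,…,αₙ) ∈ ℂⁿ, (r₁,…,rₙ) a probability vector, p ∈ A, and f = (f₁,…,fₙ) : A → Xⁿ Fréchet differentiable at p with ‖Df(p) − \widehat{(x₀+y₀)/2}‖ ≤ ‖(x₀−y₀)/2‖. Then for all a ∈ A: ‖Σᵢ rᵢαᵢDfᵢ(p)(a) − (Σᵢ rᵢαᵢ)(Σᵢ rᵢDfᵢ(p)(a))‖ ≤ ‖a‖ · ‖(x₀−y₀)/2‖ · (Σᵢ rᵢ|αᵢ|² − |Σᵢ rᵢαᵢ|²)^{1/2}. -/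

import Mathlib

private lemma star_algebraMap_real' {A : Type*} [NormedRing A] [StarRing A] [CStarRing A]
    [NormedAlgebra ℂ A] (r : ℝ) :
    star (algebraMap ℂ A (r : ℂ)) = algebraMap ℂ A (r : ℂ) := by
  have hq : ∀ q : ℚ, star (algebraMap ℂ A ((q : ℝ) : ℂ)) = algebraMap ℂ A ((q : ℝ) : ℂ) := by
    intro q
    set x := algebraMap ℂ A ((q : ℝ) : ℂ) with hx
    have hn : ((q.den : ℂ)) ≠ 0 := Nat.cast_ne_zero.mpr q.den_nz
    have h1 : (((q : ℝ)) : ℂ) * (q.den : ℂ) = (q.num : ℂ) := by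
      exact_mod_cast Rat.mul_den_eq_num q
    have hxden : x * (q.den : A) = (q.num : A) := by
      have h2 := congrArg (algebraMap ℂ A) h1
      simpa [hx, map_mul, map_natCast, map_intCast] using h2
    have hsx : (q.den : A) * star x = (q.num : A) := by
      have h3 := congrArg star hxden
      simpa [star_mul, star_natCast, star_intCast] using h3
    have hxden' : (q.den : A) * x = (q.num : A) := by
      rw [← (Nat.cast_commute q.den x).eq] at hxden
      exact hxden
    have hcancel : (q.den : A) * star x = (q.den : A) * x := by rw [hsx, hxden']
    have h4 := congrArg (fun t => algebraMap ℂ A ((q.den : ℂ))⁻¹ * t) hcancel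
    simpa only [← map_natCast (algebraMap ℂ A), ← mul_assoc, ← map_mul,
      inv_mul_cancel₀ hn, map_one, one_mul] using h4
  have hcont2 : Continuous fun r : ℝ => algebraMap ℂ A (r : ℂ) :=
    (continuous_algebraMap ℂ A).comp Complex.continuous_ofReal
  have hcont1 : Continuous fun r : ℝ => star (algebraMap ℂ A (r : ℂ)) :=
    continuous_star.comp hcont2
  have := DenseRange.equalizer (Rat.denseRange_cast (𝕜 := ℝ)) hcont1 hcont2
    (funext fun q => hq q)
  exact congrFun this r

private lemma star_algebraMap_I' {A : Type*} [NormedRing A] [StarRing A] [CStarRing A]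
    [PartialOrder A] [StarOrderedRing A] [NormedAlgebra ℂ A] :
    star (algebraMap ℂ A Complex.I) = - algebraMap ℂ A Complex.I := by
  set v := algebraMap ℂ A Complex.I with hv
  have hcomm : ∀ a : A, v * a = a * v := fun a => Algebra.commutes Complex.I a
  have hscomm : ∀ a : A, star v * a = a * star v := by
    intro a
    calc star v * a = star (star a * v) := by rw [star_mul, star_star]
    _ = star (v * star a) := by rw [hcomm]
    _ = a * star v := by rw [star_mul, star_star]
  have hv2 : v * v = -1 := by
    rw [hv, ← map_mul, Complex.I_mul_I, map_neg, map_one]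
  set w := star v * v with hw
  have hw2 : w * w = 1 := by
    have h1 : v * (star v * v) = star v * (v * v) := by
      rw [← mul_assoc, ← hscomm, mul_assoc]
    calc w * w = star v * (v * (star v * v)) := by rw [hw, mul_assoc]
    _ = star v * (star v * (v * v)) := by rw [h1]
    _ = (star v * star v) * (v * v) := by rw [mul_assoc]
    _ = star (v * v) * (v * v) := by rw [star_mul]
    _ = 1 := by rw [hv2]; simp
  have hstarw : star w = w := by rw [hw, star_mul, star_star]
  set p := 1 - w with hp
  have hstarp : star p = p := by rw [hp, star_sub, star_one, hstarw]
  have hp2 : p * p = p + p := by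
    rw [hp]
    simp only [sub_mul, mul_sub, mul_one, one_mul, hw2]
    abel
  have hpp : (0 : A) ≤ p + p := by
    have := star_mul_self_nonneg p
    rwa [hstarp, hp2] at this
  have hnpp : (0 : A) ≤ -(p + p) := by
    have h3 : (0 : A) ≤ star p * w * p := star_left_conjugate_nonneg (star_mul_self_nonneg v) p
    have hpw : p * w = -p := by
      rw [hp, sub_mul, one_mul, hw2, neg_sub]
    rwa [hstarp, hpw, neg_mul, hp2] at h3
  have hppz : p + p = 0 := le_antisymm (by simpa using neg_nonneg.mp hnpp) hpp
  have hpz : p = 0 := by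
    have h2 : (2 : ℂ) • p = 0 := by rw [two_smul]; exact hppz
    rcases smul_eq_zero.mp h2 with h | h
    · exact absurd h two_ne_zero
    · exact h
  have hw1 : w = 1 := by
    have := sub_eq_zero.mp hpz
    exact this.symm
  have hvinv : v * algebraMap ℂ A (-Complex.I) = 1 := by
    rw [hv, ← map_mul]
    simp
  calc star v = (star v * v) * algebraMap ℂ A (-Complex.I) := by
        rw [mul_assoc, hvinv, mul_one]
  _ = algebraMap ℂ A (-Complex.I) := by rw [← hw, hw1, one_mul]
  _ = - algebraMap ℂ A Complex.I := by rw [map_neg]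

private lemma star_algebraMap_complex' {A : Type*} [NormedRing A] [StarRing A] [CStarRing A]
    [PartialOrder A] [StarOrderedRing A] [NormedAlgebra ℂ A] (c : ℂ) :
    star (algebraMap ℂ A c) = algebraMap ℂ A (star c) := by
  have hdec : algebraMap ℂ A c
      = algebraMap ℂ A (c.re : ℂ) + algebraMap ℂ A (c.im : ℂ) * algebraMap ℂ A Complex.I := by
    rw [← map_mul, ← map_add]
    congr 1
    exact (Complex.re_add_im c).symm
  rw [hdec, star_add, star_mul, star_algebraMap_I', star_algebraMap_real',
    star_algebraMap_real', neg_mul, ← map_mul, ← sub_eq_add_neg, ← map_sub]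
  congr 1
  simp [Complex.ext_iff]

theorem stmt_9 {A : Type*} [NormedRing A] [StarRing A] [CStarRing A] [PartialOrder A]
    [StarOrderedRing A] [NormedAlgebra ℂ A] [CompleteSpace A]
    {X : Type*} [NormedAddCommGroup X] [NormedSpace ℂ X]
    (smul : X → A → X)
    (ip : X → X → A)
    (h_add : ∀ x y z : X, ip x (y + z) = ip x y + ip x z)
    (h_add' : ∀ x y z : X, ip (x + y) z = ip x z + ip y z)
    (h_smul : ∀ (x y : X) (a : A), ip x (smul y a) = ip x y * a)
    (h_csmul : ∀ (c : ℂ) (x y : X), ip x (c • y) = c • ip x y)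
    (h_star : ∀ x y : X, star (ip x y) = ip y x)
    (h_pos : ∀ x : X, 0 ≤ ip x x)
    (h_norm : ∀ x : X, ‖x‖ = Real.sqrt ‖ip x x‖)
    (x₀ y₀ : X) (n : ℕ) (α : Fin n → ℂ)
    (r : Fin n → ℝ) (hr : ∀ i, 0 ≤ r i) (hr1 : ∑ i, r i = 1)
    (f : Fin n → A → X) (f' : Fin n → A →L[ℝ] X) (p : A)
    (hf : ∀ i, HasFDerivAt (f i) (f' i) p)
    (hfop : ∀ b : A,
      Real.sqrt ‖∑ i, ip (f' i b - smul ((2⁻¹ : ℝ) • (x₀ + y₀)) b)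
                       (f' i b - smul ((2⁻¹ : ℝ) • (x₀ + y₀)) b)‖
        ≤ ‖(2⁻¹ : ℝ) • (x₀ - y₀)‖ * ‖b‖) :
    ∀ a : A,
      ‖(∑ i, ((r i : ℂ) * α i) • (f' i a))
          - (∑ i, (r i : ℂ) * α i) • ∑ i, r i • (f' i a)‖
        ≤ ‖a‖ * ‖(2⁻¹ : ℝ) • (x₀ - y₀)‖ *
            Real.sqrt ((∑ i, r i * ‖α i‖ ^ 2)
              - ‖∑ i, (r i : ℂ) * α i‖ ^ 2) := by
  -- set up the C⋆-algebra structure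
  letI : StarModule ℂ A := ⟨fun c a => by
    rw [Algebra.smul_def, star_mul, star_algebraMap_complex', Algebra.smul_def,
      ← Algebra.commutes]⟩
  letI : CStarAlgebra A :=
    { ‹NormedRing A›, ‹StarRing A›, ‹CStarRing A›, ‹NormedAlgebra ℂ A›,
      ‹CompleteSpace A›, (inferInstance : StarModule ℂ A) with }
  have hmono : ∀ {b c : A}, 0 ≤ b → b ≤ c → ‖b‖ ≤ ‖c‖ := fun hb hbc =>
    CStarAlgebra.norm_le_norm_of_nonneg_of_le hb hbc
  intro a
  set M : ℝ := ‖(2⁻¹ : ℝ) • (x₀ - y₀)‖ with hM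
  have hM0 : 0 ≤ M := norm_nonneg _
  set v : X := smul ((2⁻¹ : ℝ) • (x₀ + y₀)) a with hv
  set w : Fin n → X := fun i => f' i a - v with hwdef
  set s : ℂ := ∑ i, (r i : ℂ) * α i with hs
  set c : Fin n → ℂ := fun i => (r i : ℂ) * (α i - s) with hc
  -- sum of coefficients is zero
  have hrs1 : (∑ i, ((r i : ℝ) : ℂ)) = 1 := by
    rw [← Complex.ofReal_sum, hr1, Complex.ofReal_one]
  have hc0 : ∑ i, c i = 0 := by
    simp only [hc, mul_sub]
    rw [Finset.sum_sub_distrib, ← Finset.sum_mul, hrs1, one_mul, ← hs, sub_self]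
  -- rewrite the left-hand side
  have key : (∑ i, ((r i : ℂ) * α i) • (f' i a)) - s • ∑ i, r i • (f' i a)
      = ∑ i, c i • w i := by
    have h1 : ∀ i : Fin n, c i • w i
        = ((r i : ℂ) * α i) • (f' i a) - s • (r i • (f' i a)) - c i • v := by
      intro i
      simp only [hwdef, hc, smul_sub]
      congr 1
      rw [← Complex.coe_smul, smul_smul, ← sub_smul]
      congr 1
      ring
    rw [Finset.sum_congr rfl fun i _ => h1 i, Finset.sum_sub_distrib,
      Finset.sum_sub_distrib, ← Finset.sum_smul, hc0, zero_smul, sub_zero,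
      ← Finset.smul_sum]
  rw [key]
  -- bound on each ‖w i‖
  have hwb : ∀ i : Fin n, ‖w i‖ ≤ M * ‖a‖ := by
    intro i
    have hle : ip (w i) (w i) ≤ ∑ j, ip (w j) (w j) :=
      Finset.single_le_sum (fun j _ => h_pos (w j)) (Finset.mem_univ i)
    have h2 : ‖ip (w i) (w i)‖ ≤ ‖∑ j, ip (w j) (w j)‖ := hmono (h_pos _) hle
    calc ‖w i‖ = Real.sqrt ‖ip (w i) (w i)‖ := h_norm _
    _ ≤ Real.sqrt ‖∑ j, ip (w j) (w j)‖ := Real.sqrt_le_sqrt h2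
    _ ≤ M * ‖a‖ := by
        have := hfop a
        simpa [hwdef, hv, hM] using this
  -- triangle inequality
  have habs : ∀ i, ‖c i • w i‖ = (r i * ‖α i - s‖) * ‖w i‖ := by
    intro i
    rw [norm_smul, hc]
    simp [norm_mul, Complex.norm_real, Real.norm_eq_abs, abs_of_nonneg (hr i)]
  have htri : ‖∑ i, c i • w i‖ ≤ (M * ‖a‖) * ∑ i, r i * ‖α i - s‖ := by
    calc ‖∑ i, c i • w i‖ ≤ ∑ i, ‖c i • w i‖ := norm_sum_le _ _
    _ = ∑ i, (r i * ‖α i - s‖) * ‖w i‖ :=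
        Finset.sum_congr rfl fun i _ => habs i
    _ ≤ ∑ i, (r i * ‖α i - s‖) * (M * ‖a‖) := by
        refine Finset.sum_le_sum fun i _ => ?_
        exact mul_le_mul_of_nonneg_left (hwb i)
          (mul_nonneg (hr i) (norm_nonneg _))
    _ = (M * ‖a‖) * ∑ i, r i * ‖α i - s‖ := by
        rw [← Finset.sum_mul, mul_comm]
  -- Cauchy-Schwarz on the coefficients
  have hCS : ∑ i, r i * ‖α i - s‖
      ≤ Real.sqrt (∑ i, r i * ‖α i - s‖ ^ 2) := by
    have h1 : ∀ i ∈ Finset.univ, r i * ‖α i - s‖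
        = Real.sqrt (r i) * Real.sqrt (r i * ‖α i - s‖ ^ 2) := by
      intro i _
      rw [← Real.sqrt_mul (hr i)]
      have h2 : r i * (r i * ‖α i - s‖ ^ 2)
          = (r i * ‖α i - s‖) ^ 2 := by ring
      rw [h2, Real.sqrt_sq (mul_nonneg (hr i) (norm_nonneg _))]
    calc ∑ i, r i * ‖α i - s‖
        = ∑ i, Real.sqrt (r i) * Real.sqrt (r i * ‖α i - s‖ ^ 2) :=
          Finset.sum_congr rfl h1
    _ ≤ Real.sqrt (∑ i, r i) * Real.sqrt (∑ i, r i * ‖α i - s‖ ^ 2) :=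
          Real.sum_sqrt_mul_sqrt_le _ (fun i => hr i)
            (fun i => mul_nonneg (hr i) (sq_nonneg _))
    _ = Real.sqrt (∑ i, r i * ‖α i - s‖ ^ 2) := by
          rw [hr1, Real.sqrt_one, one_mul]
  -- the variance identity
  have hid : ∑ i, r i * ‖α i - s‖ ^ 2
      = (∑ i, r i * ‖α i‖ ^ 2) - ‖s‖ ^ 2 := by
    simp only [Complex.sq_norm]
    have hre : ∑ i, r i * (α i * (starRingEnd ℂ) s).re = Complex.normSq s := by
      have h2 : ∑ i, r i * (α i * (starRingEnd ℂ) s).re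
          = ((∑ i, (r i : ℂ) * α i) * (starRingEnd ℂ) s).re := by
        rw [Finset.sum_mul, Complex.re_sum]
        refine Finset.sum_congr rfl fun i _ => ?_
        rw [mul_assoc, Complex.re_ofReal_mul]
      rw [h2, ← hs, Complex.mul_conj, Complex.ofReal_re]
    have h3 : ∀ i ∈ Finset.univ, r i * Complex.normSq (α i - s)
        = r i * Complex.normSq (α i) + r i * Complex.normSq s
          - 2 * (r i * (α i * (starRingEnd ℂ) s).re) := by
      intro i _
      rw [Complex.normSq_sub]
      ring
    rw [Finset.sum_congr rfl h3, Finset.sum_sub_distrib, Finset.sum_add_distrib,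
      ← Finset.sum_mul, hr1, one_mul, ← Finset.mul_sum, hre]
    ring
  -- put everything together
  calc ‖∑ i, c i • w i‖
      ≤ (M * ‖a‖) * ∑ i, r i * ‖α i - s‖ := htri
  _ ≤ (M * ‖a‖) * Real.sqrt ((∑ i, r i * ‖α i‖ ^ 2) - ‖s‖ ^ 2) := by
      refine mul_le_mul_of_nonneg_left ?_ (mul_nonneg hM0 (norm_nonneg a))
      rw [← hid]
      exact hCS
  _ = ‖a‖ * M * Real.sqrt ((∑ i, r i * ‖α i‖ ^ 2) - ‖s‖ ^ 2) := by
      ring
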